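/- For p = 2, the ℤ-linear map Ĥ : Eℤ_2 ⊗ I → I ⊗ I defined on generators a ∈ {1, θ} of the degree-k summand (Eℤ_2)_k by: Ĥ(a ⊗ s_j) = s_j ⊗ s_j for a ∈ (Eℤ_2)_0 and j = 0,1; Ĥ(a ⊗ s_j) = 0 for a ∈ (Eℤ_2)_k with k ≥ 1 and j = 0,1; Ĥ(1 ⊗ s) = s₁ ⊗ s + s ⊗ s₀ and Ĥ(θ ⊗ s) = s ⊗ s₁ + s₀ ⊗ s for 1, θ ∈ (Eℤ_2)_0; Ĥ(1 ⊗ s) = s ⊗ s and Ĥ(θ ⊗ s) = −s ⊗ s for 1, θ ∈ (Eℤ_2)_1; and Ĥ(a ⊗ s) = 0 for a ∈ (Eℤ_2)_k with k ≥ 2; is a chain map and is equivariant for the ℤ/2-actions (θ acting on Eℤ_2 ⊗ I through the Eℤ_2 factor, and on I ⊗ I by the signed transposition θ·(x ⊗ y) = (−1)^{|x||y|} y ⊗ x). -/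

import Mathlib

/-- A chain complex of abelian groups, indexed by `ℤ`, with differential presented as a
family `d i j : X i → X j` for all pairs of degrees, vanishing unless `j = i - 1`,
and squaring to zero. -/
structure Cx : Type 1 where
  X : ℤ → Type
  grp : ∀ n, AddCommGroup (X n)
  d : ∀ i j : ℤ, X i →+ X j
  d_off : ∀ i j, j ≠ i - 1 → d i j = 0
  dsq : ∀ i j k (x : X i), d j k (d i j x) = 0

attribute [instance] Cx.grp

/-- A chain map between chain complexes of abelian groups. -/
structure ChainMap (C D : Cx) where
  f : ∀ n, C.X n →+ D.X n
  comm : ∀ i j (x : C.X i), f j (C.d i j x) = D.d i j (f i x)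

/-- A chain homotopy from `f₀` to `f₁`, presented as a family `h i j : C i → D j`
vanishing unless `j = i + 1` and satisfying `d∘h + h∘d = f₁ - f₀`. -/
structure Htpy {C D : Cx} (f₀ f₁ : ChainMap C D) where
  h : ∀ i j : ℤ, C.X i →+ D.X j
  h_off : ∀ i j, j ≠ i + 1 → h i j = 0
  cond : ∀ n (x : C.X n),
    D.d (n + 1) n (h n (n + 1) x) + h (n - 1) n (C.d n (n - 1) x) =
      f₁.f n x - f₀.f n x

/-- `(-1)^i` for `i : ℤ`. -/
def sgn (i : ℤ) : ℤ := if Even i then 1 else -1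

/-- Place `x : X m` in the `j`-th slot of the family `v`, reindexing along
`Function.update k j m`. -/
def updD {p : ℕ} {X : ℤ → Type} (k : Fin p → ℤ) (v : ∀ i, X (k i)) (j : Fin p) {m : ℤ}
    (x : X m) : ∀ i, X (Function.update k j m i) :=
  fun i =>
    if h : i = j then cast (congrArg X (by rw [h, Function.update_self])) x
    else cast (congrArg X (Function.update_of_ne h m k).symm) (v i)

lemma sum_update {p : ℕ} (k : Fin p → ℤ) (j : Fin p) (m : ℤ) :
    ∑ i, Function.update k j m i = (∑ i, k i) - k j + m := by
  rw [Finset.sum_update_of_mem (Finset.mem_univ j), Finset.sdiff_singleton_eq_erase,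
    ← Finset.sum_erase_add Finset.univ k (Finset.mem_univ j)]
  ring

/-- `T` realizes the tensor product `C ⊗ D` of chain complexes of abelian groups
(with the Koszul sign convention), via the pure-tensor maps `ι`. -/
structure IsTensor (C D T : Cx) where
  ι : ∀ (i j n : ℤ), i + j = n → C.X i → D.X j → T.X n
  ι_addl : ∀ i j n h x x' y, ι i j n h (x + x') y = ι i j n h x y + ι i j n h x' y
  ι_addr : ∀ i j n h x y y', ι i j n h x (y + y') = ι i j n h x y + ι i j n h x y'
  ι_d : ∀ i j n h x y, T.d n (n - 1) (ι i j n h x y) =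
      ι (i - 1) j (n - 1) (by omega) (C.d i (i - 1) x) y +
        sgn i • ι i (j - 1) (n - 1) (by omega) x (D.d j (j - 1) y)
  univ : ∀ (A : ℤ → Type) [∀ n, AddCommGroup (A n)]
      (φ : ∀ (i j n : ℤ), i + j = n → C.X i → D.X j → A n),
      (∀ i j n h x x' y, φ i j n h (x + x') y = φ i j n h x y + φ i j n h x' y) →
      (∀ i j n h x y y', φ i j n h x (y + y') = φ i j n h x y + φ i j n h x y') →
      ∃! ψ : ∀ n, T.X n →+ A n, ∀ i j n h x y, ψ n (ι i j n h x y) = φ i j n h x y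

/-- `T` realizes the `p`-fold tensor power `C^{⊗p}` of a chain complex of abelian
groups (with the Koszul sign convention), via the pure-tensor maps `ι`. -/
structure IsTensorPow (C : Cx) (p : ℕ) (T : Cx) where
  ι : ∀ (k : Fin p → ℤ) (n : ℤ), (∑ i, k i) = n → (∀ i, C.X (k i)) → T.X n
  ι_add : ∀ k n h (v : ∀ i, C.X (k i)) (j : Fin p) (x y : C.X (k j)),
    ι k n h (Function.update v j (x + y)) =
      ι k n h (Function.update v j x) + ι k n h (Function.update v j y)
  ι_d : ∀ k n h v, T.d n (n - 1) (ι k n h v) =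
    ∑ j : Fin p, sgn (∑ i ∈ Finset.univ.filter (· < j), k i) •
      ι (Function.update k j (k j - 1)) (n - 1) (by rw [sum_update]; omega)
        (updD k v j (C.d (k j) (k j - 1) (v j)))
  univ : ∀ (A : ℤ → Type) [∀ n, AddCommGroup (A n)]
      (φ : ∀ (k : Fin p → ℤ) (n : ℤ), (∑ i, k i) = n → (∀ i, C.X (k i)) → A n),
      (∀ k n h (v : ∀ i, C.X (k i)) (j : Fin p) (x y : C.X (k j)),
        φ k n h (Function.update v j (x + y)) =
          φ k n h (Function.update v j x) + φ k n h (Function.update v j y)) →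
      ∃! ψ : ∀ n, T.X n →+ A n, ∀ k n h v, ψ n (ι k n h v) = φ k n h v

/-- `I` is the interval complex: `I_0 = ℤ² = ℤs₀ ⊕ ℤs₁`, `I_1 = ℤ = ℤs`, `I_k = 0`
otherwise, with `d s = s₁ - s₀`. -/
structure IsInterval (I : Cx) (s₀ s₁ : I.X 0) (s : I.X 1) : Prop where
  basis0 : ∀ x : I.X 0, ∃! ab : ℤ × ℤ, x = ab.1 • s₀ + ab.2 • s₁
  basis1 : ∀ x : I.X 1, ∃! a : ℤ, x = a • s
  degzero : ∀ n : ℤ, n ≠ 0 → n ≠ 1 → ∀ x : I.X n, x = 0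
  ds : I.d 1 0 s = s₁ - s₀

/-- The generator `θ` of the group ring `ℤ[ℤ_p]`. -/
noncomputable def θel (p : ℕ) : MonoidAlgebra ℤ (Multiplicative (ZMod p)) :=
  MonoidAlgebra.single (Multiplicative.ofAdd (1 : ZMod p)) 1

/-- `E` realizes the standard complex `Eℤ_p` (period-`p` resolution of `ℤ`):
`E_n = ℤ[ℤ_p]` for `n ≥ 0` (via the additive isomorphisms `e n`), `E_n = 0` for `n < 0`,
with differentials alternately `1 − θ` (odd-to-even) and `1 + θ + ⋯ + θ^{p−1}`
(even-to-odd). -/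
structure IsStdRes (p : ℕ) (E : Cx)
    (e : ∀ n : ℤ, MonoidAlgebra ℤ (Multiplicative (ZMod p)) →+ E.X n) : Prop where
  bij : ∀ n, 0 ≤ n → Function.Bijective (e n)
  neg : ∀ n, n < 0 → ∀ x : E.X n, x = 0
  dspec : ∀ k : ℤ, 1 ≤ k → ∀ a, E.d k (k - 1) (e k a) =
    e (k - 1) ((if Odd k then 1 - θel p else ∑ i ∈ Finset.range p, θel p ^ i) * a)

/-- Degrees of a pure tensor word in a power of the interval complex: positions marked
`true` carry the degree-1 generator `s`, positions marked `false` a degree-0 element. -/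
def wdeg {p : ℕ} (w : Fin p → Bool) : Fin p → ℤ := fun i => if w i then 1 else 0

/-- The pure-tensor word family with `s` at the positions marked `true` by `w` and the
degree-0 element `a i` at the positions marked `false`. -/
def wfam {p : ℕ} (I : Cx) (s : I.X 1) (a : Fin p → I.X 0) (w : Fin p → Bool) :
    ∀ i, I.X (wdeg w i) :=
  fun i =>
    if h : w i then cast (congrArg I.X (by simp [wdeg, h])) s
    else cast (congrArg I.X (by simp [wdeg, h])) (a i)
def fam2 {X : ℤ → Type} {k0 k1 : ℤ} (x : X k0) (y : X k1) : ∀ i : Fin 2, X (![k0, k1] i) :=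
  Fin.cons x (Fin.cons y finZeroElim)

lemma castX_add {X : ℤ → Type} [∀ n, AddCommGroup (X n)] {m m' : ℤ} (h : m = m') (a b : X m) :
    cast (congrArg X h) (a + b) = cast (congrArg X h) a + cast (congrArg X h) b := by
  subst h; rfl

lemma castX_zero {X : ℤ → Type} [∀ n, AddCommGroup (X n)] {m m' : ℤ} (h : m = m') :
    cast (congrArg X h) (0 : X m) = 0 := by subst h; rfl

section Aux
variable {I T : Cx} (tp : IsTensorPow I 2 T)

lemma tpι_eq {k k' : Fin 2 → ℤ} (hk : ∀ i, k i = k' i) (n : ℤ) (h : (∑ i, k i) = n)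
    (h' : (∑ i, k' i) = n) (v : ∀ i, I.X (k i)) :
    tp.ι k n h v = tp.ι k' n h' (fun i => cast (congrArg I.X (hk i)) (v i)) := by
  have hk2 : k = k' := funext hk
  subst hk2
  rfl

lemma vec2_eta (k : Fin 2 → ℤ) : ∀ i, k i = ![k 0, k 1] i := by
  intro i; fin_cases i <;> rfl

/-- pure tensor of two elements -/
def pt (k0 k1 : ℤ) (x : I.X k0) (y : I.X k1) (n : ℤ) (h : k0 + k1 = n) : T.X n :=
  tp.ι ![k0, k1] n (by simp [Fin.sum_univ_two, h]) (fam2 x y)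

lemma fam2_upd0 {k0 k1 : ℤ} (x x' : I.X k0) (y : I.X k1) :
    Function.update (fam2 (X := I.X) x y) 0 x' = fam2 x' y := by
  funext i
  fin_cases i <;> simp [fam2, Function.update] <;> rfl

lemma fam2_upd1 {k0 k1 : ℤ} (x : I.X k0) (y y' : I.X k1) :
    Function.update (fam2 (X := I.X) x y) 1 y' = fam2 x y' := by
  funext i
  fin_cases i <;> simp [fam2, Function.update] <;> rfl

lemma pt_addl (k0 k1 : ℤ) (x x' : I.X k0) (y : I.X k1) (n : ℤ) (h : k0 + k1 = n) :
    pt tp k0 k1 (x + x') y n h = pt tp k0 k1 x y n h + pt tp k0 k1 x' y n h := by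
  unfold pt
  have := tp.ι_add ![k0, k1] n (by simp [Fin.sum_univ_two, h]) (fam2 x y) 0 x x'
  have hc := fun {z z' : ∀ i, I.X (![k0, k1] i)} (hz : z = z') =>
    congrArg (tp.ι ![k0, k1] n (by simp [Fin.sum_univ_two, h])) hz
  exact (hc (fam2_upd0 x (x + x') y)).symm.trans
    (this.trans (congrArg₂ (· + ·) (hc (fam2_upd0 x x y)) (hc (fam2_upd0 x x' y))))

lemma pt_addr (k0 k1 : ℤ) (x : I.X k0) (y y' : I.X k1) (n : ℤ) (h : k0 + k1 = n) :
    pt tp k0 k1 x (y + y') n h = pt tp k0 k1 x y n h + pt tp k0 k1 x y' n h := by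
  unfold pt
  have := tp.ι_add ![k0, k1] n (by simp [Fin.sum_univ_two, h]) (fam2 x y) 1 y y'
  have hc := fun {z z' : ∀ i, I.X (![k0, k1] i)} (hz : z = z') =>
    congrArg (tp.ι ![k0, k1] n (by simp [Fin.sum_univ_two, h])) hz
  exact (hc (fam2_upd1 x y (y + y'))).symm.trans
    (this.trans (congrArg₂ (· + ·) (hc (fam2_upd1 x y y)) (hc (fam2_upd1 x y y'))))

/-- pt as AddMonoidHom in left arg -/
def ptL (k0 k1 : ℤ) (y : I.X k1) (n : ℤ) (h : k0 + k1 = n) : I.X k0 →+ T.X n :=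
  AddMonoidHom.mk' (fun x => pt tp k0 k1 x y n h) (fun x x' => pt_addl tp k0 k1 x x' y n h)

def ptR (k0 k1 : ℤ) (x : I.X k0) (n : ℤ) (h : k0 + k1 = n) : I.X k1 →+ T.X n :=
  AddMonoidHom.mk' (fun y => pt tp k0 k1 x y n h) (fun y y' => pt_addr tp k0 k1 x y y' n h)

lemma pt_zerol (k0 k1 : ℤ) (y : I.X k1) (n : ℤ) (h : k0 + k1 = n) :
    pt tp k0 k1 0 y n h = 0 := (ptL tp k0 k1 y n h).map_zero

lemma pt_zeror (k0 k1 : ℤ) (x : I.X k0) (n : ℤ) (h : k0 + k1 = n) :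
    pt tp k0 k1 x 0 n h = 0 := (ptR tp k0 k1 x n h).map_zero


lemma tpι_pt (k : Fin 2 → ℤ) (n : ℤ) (h : (∑ i, k i) = n) (v : ∀ i, I.X (k i)) :
    tp.ι k n h v = pt tp (k 0) (k 1) (v 0) (v 1) n (by rw [← h, Fin.sum_univ_two]) := by
  rw [tpι_eq tp (vec2_eta k) n h (by rw [← h]; exact (Fin.sum_univ_two k).symm ▸ (Fin.sum_univ_two _).trans rfl) v]
  unfold pt
  congr 1
  funext i
  fin_cases i <;> rfl

lemma dterm0 (k0 k1 : ℤ) (x : I.X k0) (y : I.X k1) (n : ℤ)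
    (pf : (∑ i, Function.update ![k0, k1] 0 (![k0, k1] 0 - 1) i) = n - 1) :
    tp.ι (Function.update ![k0, k1] 0 (![k0, k1] 0 - 1)) (n - 1) pf
        (updD ![k0, k1] (fam2 x y) 0 (I.d (![k0, k1] 0) (![k0, k1] 0 - 1) (fam2 x y 0))) =
      pt tp (k0 - 1) k1 (I.d k0 (k0 - 1) x) y (n - 1)
        (by rw [← pf, Fin.sum_univ_two]; simp [Function.update]) := by
  rw [tpι_eq tp (k' := ![k0 - 1, k1]) (fun i => by fin_cases i <;> simp [Function.update]) _ pf
    (by rw [← pf]; rw [Fin.sum_univ_two, Fin.sum_univ_two]; simp [Function.update])]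
  unfold pt
  congr 1
  funext i
  fin_cases i <;> rfl

lemma dterm1 (k0 k1 : ℤ) (x : I.X k0) (y : I.X k1) (n : ℤ)
    (pf : (∑ i, Function.update ![k0, k1] 1 (![k0, k1] 1 - 1) i) = n - 1) :
    tp.ι (Function.update ![k0, k1] 1 (![k0, k1] 1 - 1)) (n - 1) pf
        (updD ![k0, k1] (fam2 x y) 1 (I.d (![k0, k1] 1) (![k0, k1] 1 - 1) (fam2 x y 1))) =
      pt tp k0 (k1 - 1) x (I.d k1 (k1 - 1) y) (n - 1)
        (by rw [← pf, Fin.sum_univ_two]; simp [Function.update]) := by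
  rw [tpι_eq tp (k' := ![k0, k1 - 1]) (fun i => by fin_cases i <;> simp [Function.update]) _ pf
    (by rw [← pf]; rw [Fin.sum_univ_two, Fin.sum_univ_two]; simp [Function.update])]
  unfold pt
  congr 1
  funext i
  fin_cases i <;> rfl


lemma d_pt (k0 k1 : ℤ) (x : I.X k0) (y : I.X k1) (n : ℤ) (h : k0 + k1 = n) :
    T.d n (n - 1) (pt tp k0 k1 x y n h) =
      pt tp (k0 - 1) k1 (I.d k0 (k0 - 1) x) y (n - 1) (by omega) +
        sgn k0 • pt tp k0 (k1 - 1) x (I.d k1 (k1 - 1) y) (n - 1) (by omega) := by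
  show T.d n (n - 1) (tp.ι ![k0, k1] n _ (fam2 x y)) = _
  rw [tp.ι_d, Fin.sum_univ_two]
  have e0 : Finset.filter (· < (0 : Fin 2)) Finset.univ = (∅ : Finset (Fin 2)) := by decide
  have e1 : Finset.filter (· < (1 : Fin 2)) Finset.univ = ({0} : Finset (Fin 2)) := by decide
  rw [e0, e1, Finset.sum_empty, Finset.sum_singleton]
  rw [dterm0 tp k0 k1 x y n _, dterm1 tp k0 k1 x y n _]
  have hs0 : sgn (0 : ℤ) = 1 := by norm_num [sgn]
  have hs1 : sgn (![k0, k1] 0) = sgn k0 := rfl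
  rw [hs0, hs1, one_smul]


abbrev R2 := MonoidAlgebra ℤ (Multiplicative (ZMod 2))
noncomputable def c0 : R2 →+ ℤ := (Finsupp.applyAddHom (1 : Multiplicative (ZMod 2))).comp
  (MonoidAlgebra.coeffAddEquiv : R2 ≃+ _).toAddMonoidHom
noncomputable def c1 : R2 →+ ℤ := (Finsupp.applyAddHom (Multiplicative.ofAdd (1 : ZMod 2))).comp
  (MonoidAlgebra.coeffAddEquiv : R2 ≃+ _).toAddMonoidHom
lemma c0_apply (a : R2) : c0 a = a.coeff 1 := rfl
lemma c1_apply (a : R2) : c1 a = a.coeff (Multiplicative.ofAdd (1 : ZMod 2)) := rfl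
lemma c0_theta (a : R2) : c0 (θel 2 * a) = c1 a := by
  rw [c0_apply, c1_apply, θel, MonoidAlgebra.coeff_single_mul_apply, one_mul]
  congr 1
lemma c1_theta (a : R2) : c1 (θel 2 * a) = c0 a := by
  rw [c0_apply, c1_apply, θel, MonoidAlgebra.coeff_single_mul_apply, one_mul]
  congr 1
lemma c0_one : c0 1 = 1 := by
  rw [c0_apply, MonoidAlgebra.one_def]; simp
lemma c1_one : c1 1 = 0 := by
  rw [c1_apply, MonoidAlgebra.one_def, MonoidAlgebra.coeff_single_apply, if_neg (by decide)]
lemma c0_th : c0 (θel 2) = 0 := by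
  rw [c0_apply, θel, MonoidAlgebra.coeff_single_apply, if_neg (by decide)]
lemma c1_th : c1 (θel 2) = 1 := by
  rw [c1_apply, θel, MonoidAlgebra.coeff_single_apply, if_pos rfl]
lemma c0_onesub (a : R2) : c0 ((1 - θel 2) * a) = c0 a - c1 a := by
  rw [sub_mul, one_mul, map_sub, c0_theta]
lemma c1_onesub (a : R2) : c1 ((1 - θel 2) * a) = c1 a - c0 a := by
  rw [sub_mul, one_mul, map_sub, c1_theta]
lemma c0_oneadd (a : R2) : c0 ((1 + θel 2) * a) = c0 a + c1 a := by
  rw [add_mul, one_mul, map_add, c0_theta]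
lemma c1_oneadd (a : R2) : c1 ((1 + θel 2) * a) = c1 a + c0 a := by
  rw [add_mul, one_mul, map_add, c1_theta]
lemma sum_theta : ∑ i ∈ Finset.range 2, θel 2 ^ i = 1 + θel 2 := by
  rw [Finset.sum_range_succ, Finset.sum_range_one, pow_zero, pow_one]
lemma sgn_zero : sgn 0 = 1 := by norm_num [sgn]
lemma sgn_one : sgn 1 = -1 := by norm_num [sgn]

section Aux2
variable {I : Cx} {s₀ s₁ : I.X 0} {s : I.X 1} (hI : IsInterval I s₀ s₁ s)

noncomputable def co0 (y : I.X 0) : ℤ × ℤ := (hI.basis0 y).choose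
lemma co0_spec (y : I.X 0) : y = (co0 hI y).1 • s₀ + (co0 hI y).2 • s₁ :=
  (hI.basis0 y).choose_spec.1
lemma co0_uniq {y : I.X 0} {ab : ℤ × ℤ} (h : y = ab.1 • s₀ + ab.2 • s₁) :
    ab = co0 hI y := (hI.basis0 y).choose_spec.2 ab h
lemma co0_comb (m m' : ℤ) : co0 hI (m • s₀ + m' • s₁) = (m, m') :=
  (co0_uniq hI (ab := (m, m')) rfl).symm
lemma co0_s0 : co0 hI s₀ = (1, 0) := by
  rw [← co0_comb hI 1 0]; norm_num
lemma co0_s1 : co0 hI s₁ = (0, 1) := by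
  rw [← co0_comb hI 0 1]; norm_num
lemma co0_add (y y' : I.X 0) : co0 hI (y + y') = co0 hI y + co0 hI y' := by
  refine (co0_uniq hI ?_).symm
  calc y + y' = ((co0 hI y).1 • s₀ + (co0 hI y).2 • s₁)
        + ((co0 hI y').1 • s₀ + (co0 hI y').2 • s₁) := by
        rw [← co0_spec, ← co0_spec]
    _ = _ := by simp [Prod.fst_add, Prod.snd_add, add_smul]; abel

noncomputable def co1 (y : I.X 1) : ℤ := (hI.basis1 y).choose
lemma co1_spec (y : I.X 1) : y = co1 hI y • s := (hI.basis1 y).choose_spec.1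
lemma co1_uniq {y : I.X 1} {m : ℤ} (h : y = m • s) : m = co1 hI y :=
  (hI.basis1 y).choose_spec.2 m h
lemma co1_s : co1 hI s = 1 := (co1_uniq hI (one_smul ℤ s).symm).symm
lemma co1_add (y y' : I.X 1) : co1 hI (y + y') = co1 hI y + co1 hI y' := by
  refine (co1_uniq hI ?_).symm
  rw [add_smul, ← co1_spec, ← co1_spec]

end Aux2

section Aux3
variable {E : Cx} {e : ∀ n : ℤ, R2 →+ E.X n} (hE : IsStdRes 2 E e)

noncomputable def ee (n : ℤ) (hn : 0 ≤ n) : E.X n ≃+ R2 :=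
  (AddEquiv.ofBijective (e n) (hE.bij n hn)).symm
lemma ee_e (n : ℤ) (hn : 0 ≤ n) (a : R2) : ee hE n hn (e n a) = a := by
  unfold ee
  exact AddEquiv.symm_apply_apply _ _
lemma e_ee (n : ℤ) (hn : 0 ≤ n) (x : E.X n) : e n (ee hE n hn x) = x := by
  unfold ee
  exact AddEquiv.apply_symm_apply (AddEquiv.ofBijective (e n) (hE.bij n hn)) x

end Aux3

section Aux4
variable {I : Cx} (s₀ s₁ : I.X 0) (s : I.X 1) {T : Cx} (tp : IsTensorPow I 2 T)

/-- s₀ ⊗ s₀ -/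
def B00 : T.X 0 := pt tp 0 0 s₀ s₀ 0 rfl
/-- s₁ ⊗ s₁ -/
def B11 : T.X 0 := pt tp 0 0 s₁ s₁ 0 rfl
/-- s₁ ⊗ s + s ⊗ s₀ -/
def QQ : T.X 1 := pt tp 0 1 s₁ s 1 rfl + pt tp 1 0 s s₀ 1 rfl
/-- s ⊗ s₁ + s₀ ⊗ s -/
def QQ' : T.X 1 := pt tp 1 0 s s₁ 1 rfl + pt tp 0 1 s₀ s 1 rfl
/-- s ⊗ s -/
def RR : T.X 2 := pt tp 1 1 s s 2 rfl

variable (hI : IsInterval I s₀ s₁ s) {E : Cx} {e : ∀ n : ℤ, R2 →+ E.X n}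
  (hE : IsStdRes 2 E e)

noncomputable def val00 (x : E.X 0) (y : I.X 0) : T.X 0 :=
  (c0 (ee hE 0 le_rfl x) + c1 (ee hE 0 le_rfl x)) •
    ((co0 hI y).1 • B00 s₀ tp + (co0 hI y).2 • B11 s₁ tp)

noncomputable def val01 (x : E.X 0) (y : I.X 1) : T.X 1 :=
  co1 hI y • (c0 (ee hE 0 le_rfl x) • QQ s₀ s₁ s tp + c1 (ee hE 0 le_rfl x) • QQ' s₀ s₁ s tp)

noncomputable def val11 (x : E.X 1) (y : I.X 1) : T.X 2 :=
  (co1 hI y * (c0 (ee hE 1 zero_le_one x) - c1 (ee hE 1 zero_le_one x))) • RR s tp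

lemma val00_addl (x x' : E.X 0) (y : I.X 0) :
    val00 s₀ s₁ s tp hI hE (x + x') y = val00 s₀ s₁ s tp hI hE x y + val00 s₀ s₁ s tp hI hE x' y := by
  unfold val00
  rw [map_add (ee hE 0 le_rfl), map_add, map_add, ← add_smul]
  ring_nf
lemma val00_addr (x : E.X 0) (y y' : I.X 0) :
    val00 s₀ s₁ s tp hI hE x (y + y') = val00 s₀ s₁ s tp hI hE x y + val00 s₀ s₁ s tp hI hE x y' := by
  unfold val00
  rw [co0_add, Prod.fst_add, Prod.snd_add, ← smul_add]
  congr 1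
  rw [add_smul, add_smul]
  abel
lemma val01_addl (x x' : E.X 0) (y : I.X 1) :
    val01 s₀ s₁ s tp hI hE (x + x') y = val01 s₀ s₁ s tp hI hE x y + val01 s₀ s₁ s tp hI hE x' y := by
  unfold val01
  rw [map_add (ee hE 0 le_rfl), map_add, map_add, ← smul_add]
  congr 1
  rw [add_smul, add_smul]
  abel
lemma val01_addr (x : E.X 0) (y y' : I.X 1) :
    val01 s₀ s₁ s tp hI hE x (y + y') = val01 s₀ s₁ s tp hI hE x y + val01 s₀ s₁ s tp hI hE x y' := by
  unfold val01
  rw [co1_add, add_smul]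
lemma val11_addl (x x' : E.X 1) (y : I.X 1) :
    val11 s₀ s₁ s tp hI hE (x + x') y = val11 s₀ s₁ s tp hI hE x y + val11 s₀ s₁ s tp hI hE x' y := by
  unfold val11
  rw [map_add (ee hE 1 zero_le_one), map_add, map_add, ← add_smul]
  ring_nf
lemma val11_addr (x : E.X 1) (y y' : I.X 1) :
    val11 s₀ s₁ s tp hI hE x (y + y') = val11 s₀ s₁ s tp hI hE x y + val11 s₀ s₁ s tp hI hE x y' := by
  unfold val11
  rw [co1_add, ← add_smul, add_mul]

end Aux4

section Aux5
variable {I : Cx} (s₀ s₁ : I.X 0) (s : I.X 1) {T : Cx} (tp : IsTensorPow I 2 T)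

lemma pt_subl (k0 k1 : ℤ) (x x' : I.X k0) (y : I.X k1) (n : ℤ) (h : k0 + k1 = n) :
    pt tp k0 k1 (x - x') y n h = pt tp k0 k1 x y n h - pt tp k0 k1 x' y n h :=
  (ptL tp k0 k1 y n h).map_sub x x'
lemma pt_subr (k0 k1 : ℤ) (x : I.X k0) (y y' : I.X k1) (n : ℤ) (h : k0 + k1 = n) :
    pt tp k0 k1 x (y - y') n h = pt tp k0 k1 x y n h - pt tp k0 k1 x y' n h :=
  (ptR tp k0 k1 x n h).map_sub y y'

variable (hI : IsInterval I s₀ s₁ s)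

lemma d_pt00 (hI : IsInterval I s₀ s₁ s) (y z : I.X 0) : T.d 0 (0 - 1) (pt tp 0 0 y z 0 rfl) = 0 := by
  rw [d_pt]
  have hy : I.d 0 (0 - 1) y = 0 := hI.degzero _ (by norm_num) (by norm_num) _
  have hz : I.d 0 (0 - 1) z = 0 := hI.degzero _ (by norm_num) (by norm_num) _
  rw [hy, hz, pt_zerol, pt_zeror, smul_zero, add_zero]

lemma dQQ (hI : IsInterval I s₀ s₁ s) : T.d 1 (1 - 1) (QQ s₀ s₁ s tp) = B11 s₁ tp - B00 s₀ tp := by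
  unfold QQ
  rw [map_add, d_pt, d_pt]
  have hz1 : I.d 0 (0 - 1) s₁ = 0 := hI.degzero _ (by norm_num) (by norm_num) _
  have hz0 : I.d 0 (0 - 1) s₀ = 0 := hI.degzero _ (by norm_num) (by norm_num) _
  have hds : I.d 1 (1 - 1) s = s₁ - s₀ := hI.ds
  rw [hz1, hz0, hds, pt_zerol, pt_zeror, smul_zero, add_zero, zero_add, sgn_zero, one_smul,
    pt_subr, pt_subl]
  have hC : pt tp 0 0 s₁ s₁ 0 rfl - pt tp 0 0 s₁ s₀ 0 rfl +
      (pt tp 0 0 s₁ s₀ 0 rfl - pt tp 0 0 s₀ s₀ 0 rfl) = B11 s₁ tp - B00 s₀ tp := by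
    unfold B11 B00; abel
  exact hC

lemma dQQ' (hI : IsInterval I s₀ s₁ s) : T.d 1 (1 - 1) (QQ' s₀ s₁ s tp) = B11 s₁ tp - B00 s₀ tp := by
  unfold QQ'
  rw [map_add, d_pt, d_pt]
  have hz1 : I.d 0 (0 - 1) s₁ = 0 := hI.degzero _ (by norm_num) (by norm_num) _
  have hz0 : I.d 0 (0 - 1) s₀ = 0 := hI.degzero _ (by norm_num) (by norm_num) _
  have hds : I.d 1 (1 - 1) s = s₁ - s₀ := hI.ds
  rw [hz1, hz0, hds, pt_zerol, pt_zeror, smul_zero, add_zero, zero_add, sgn_zero, one_smul,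
    pt_subl, pt_subr]
  have hC : pt tp 0 0 s₁ s₁ 0 rfl - pt tp 0 0 s₀ s₁ 0 rfl +
      (pt tp 0 0 s₀ s₁ 0 rfl - pt tp 0 0 s₀ s₀ 0 rfl) = B11 s₁ tp - B00 s₀ tp := by
    unfold B11 B00; abel
  exact hC

lemma dRR (hI : IsInterval I s₀ s₁ s) : T.d 2 (2 - 1) (RR s tp) = QQ s₀ s₁ s tp - QQ' s₀ s₁ s tp := by
  unfold RR
  rw [d_pt]
  have hds : I.d 1 (1 - 1) s = s₁ - s₀ := hI.ds
  rw [hds, sgn_one, neg_one_zsmul, pt_subl, pt_subr]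
  have hC : pt tp 0 1 s₁ s 1 rfl - pt tp 0 1 s₀ s 1 rfl +
      -(pt tp 1 0 s s₁ 1 rfl - pt tp 1 0 s s₀ 1 rfl) =
      QQ s₀ s₁ s tp - QQ' s₀ s₁ s tp := by
    unfold QQ QQ'; abel
  exact hC

variable {Θ : ChainMap T T}

lemma theta_pt
    (hΘ : ∀ k n (h : (∑ i, k i) = n) (v : ∀ i, I.X (k i)),
      Θ.f n (tp.ι k n h v) =
        sgn (k 0 * k 1) •
          tp.ι (fun i => k (Equiv.swap 0 1 i)) n
            ((Equiv.sum_comp (Equiv.swap 0 1) k).trans h)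
            (fun i => v (Equiv.swap 0 1 i)))
    (k0 k1 : ℤ) (x : I.X k0) (y : I.X k1) (n : ℤ) (h : k0 + k1 = n) :
    Θ.f n (pt tp k0 k1 x y n h) = sgn (k0 * k1) • pt tp k1 k0 y x n (by omega) := by
  unfold pt
  rw [hΘ, tpι_pt]
  rfl

end Aux5

lemma cast_d (C : Cx) {m n : ℤ} (h : m = n) (t : C.X m) :
    C.d n (n - 1) (cast (congrArg C.X h) t) =
      cast (congrArg C.X (by rw [h] : m - 1 = n - 1)) (C.d m (m - 1) t) := by
  subst h; rfl

section Aux6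
variable {I : Cx} (s₀ s₁ : I.X 0) (s : I.X 1) {T : Cx} (tp : IsTensorPow I 2 T)
  (hI : IsInterval I s₀ s₁ s) {E : Cx} {e : ∀ n : ℤ, R2 →+ E.X n} (hE : IsStdRes 2 E e)

noncomputable def phi (i j n : ℤ) (h : i + j = n) (x : E.X i) (y : I.X j) : T.X n :=
  if h00 : i = 0 ∧ j = 0 then
    cast (congrArg T.X (show (0 : ℤ) = n by omega))
      (val00 s₀ s₁ s tp hI hE (cast (congrArg E.X h00.1) x) (cast (congrArg I.X h00.2) y))
  else if h01 : i = 0 ∧ j = 1 then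
    cast (congrArg T.X (show (1 : ℤ) = n by omega))
      (val01 s₀ s₁ s tp hI hE (cast (congrArg E.X h01.1) x) (cast (congrArg I.X h01.2) y))
  else if h11 : i = 1 ∧ j = 1 then
    cast (congrArg T.X (show (2 : ℤ) = n by omega))
      (val11 s₀ s₁ s tp hI hE (cast (congrArg E.X h11.1) x) (cast (congrArg I.X h11.2) y))
  else 0

lemma phi_eval_zero {i j n : ℤ} {h : i + j = n} {x : E.X i} {y : I.X j}
    (h0 : ¬(i = 0 ∧ j = 0)) (h1 : ¬(i = 0 ∧ j = 1)) (h2 : ¬(i = 1 ∧ j = 1)) :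
    phi s₀ s₁ s tp hI hE i j n h x y = 0 := by
  unfold phi
  rw [dif_neg h0, dif_neg h1, dif_neg h2]

lemma phi_addl (i j n : ℤ) (h : i + j = n) (x x' : E.X i) (y : I.X j) :
    phi s₀ s₁ s tp hI hE i j n h (x + x') y =
      phi s₀ s₁ s tp hI hE i j n h x y + phi s₀ s₁ s tp hI hE i j n h x' y := by
  subst h
  by_cases h00 : i = 0 ∧ j = 0
  · obtain ⟨rfl, rfl⟩ := h00
    exact val00_addl s₀ s₁ s tp hI hE x x' y
  · by_cases h01 : i = 0 ∧ j = 1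
    · obtain ⟨rfl, rfl⟩ := h01
      exact val01_addl s₀ s₁ s tp hI hE x x' y
    · by_cases h11 : i = 1 ∧ j = 1
      · obtain ⟨rfl, rfl⟩ := h11
        exact val11_addl s₀ s₁ s tp hI hE x x' y
      · rw [phi_eval_zero s₀ s₁ s tp hI hE h00 h01 h11,
          phi_eval_zero s₀ s₁ s tp hI hE h00 h01 h11,
          phi_eval_zero s₀ s₁ s tp hI hE h00 h01 h11, add_zero]

lemma phi_addr (i j n : ℤ) (h : i + j = n) (x : E.X i) (y y' : I.X j) :
    phi s₀ s₁ s tp hI hE i j n h x (y + y') =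
      phi s₀ s₁ s tp hI hE i j n h x y + phi s₀ s₁ s tp hI hE i j n h x y' := by
  subst h
  by_cases h00 : i = 0 ∧ j = 0
  · obtain ⟨rfl, rfl⟩ := h00
    exact val00_addr s₀ s₁ s tp hI hE x y y'
  · by_cases h01 : i = 0 ∧ j = 1
    · obtain ⟨rfl, rfl⟩ := h01
      exact val01_addr s₀ s₁ s tp hI hE x y y'
    · by_cases h11 : i = 1 ∧ j = 1
      · obtain ⟨rfl, rfl⟩ := h11
        exact val11_addr s₀ s₁ s tp hI hE x y y'
      · rw [phi_eval_zero s₀ s₁ s tp hI hE h00 h01 h11,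
          phi_eval_zero s₀ s₁ s tp hI hE h00 h01 h11,
          phi_eval_zero s₀ s₁ s tp hI hE h00 h01 h11, add_zero]

lemma phi_zerol (i j n : ℤ) (h : i + j = n) (y : I.X j) :
    phi s₀ s₁ s tp hI hE i j n h 0 y = 0 := by
  have h2 := phi_addl s₀ s₁ s tp hI hE i j n h 0 0 y
  rw [add_zero] at h2
  exact (left_eq_add.mp h2)

lemma phi_zeror (i j n : ℤ) (h : i + j = n) (x : E.X i) :
    phi s₀ s₁ s tp hI hE i j n h x 0 = 0 := by
  have h2 := phi_addr s₀ s₁ s tp hI hE i j n h x 0 0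
  rw [add_zero] at h2
  exact (left_eq_add.mp h2)

/-- generic evaluation of val00 on `e 0 a` -/
lemma val00_gen (a : R2) (y : I.X 0) :
    val00 s₀ s₁ s tp hI hE (e 0 a) y =
      (c0 a + c1 a) • ((co0 hI y).1 • B00 s₀ tp + (co0 hI y).2 • B11 s₁ tp) := by
  unfold val00
  rw [ee_e]

lemma val01_gen (a : R2) (y : I.X 1) :
    val01 s₀ s₁ s tp hI hE (e 0 a) y =
      co1 hI y • (c0 a • QQ s₀ s₁ s tp + c1 a • QQ' s₀ s₁ s tp) := by
  unfold val01
  rw [ee_e]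

lemma val11_gen (a : R2) (y : I.X 1) :
    val11 s₀ s₁ s tp hI hE (e 1 a) y = (co1 hI y * (c0 a - c1 a)) • RR s tp := by
  unfold val11
  rw [ee_e]

/-- (D1) -/
lemma dval00 (x : E.X 0) (y : I.X 0) :
    T.d 0 (0 - 1) (val00 s₀ s₁ s tp hI hE x y) = 0 := by
  unfold val00
  rw [map_zsmul, map_add, map_zsmul, map_zsmul]
  unfold B00 B11
  rw [d_pt00 s₀ s₁ s tp hI, d_pt00 s₀ s₁ s tp hI, smul_zero, smul_zero, add_zero, smul_zero]

/-- (D2) -/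
lemma dval2 (x : E.X 0) (y : I.X 1) :
    val00 s₀ s₁ s tp hI hE x (I.d 1 (1 - 1) y) = T.d 1 (1 - 1) (val01 s₀ s₁ s tp hI hE x y) := by
  have hy : I.d 1 (1 - 1) y = (-(co1 hI y)) • s₀ + (co1 hI y) • s₁ := by
    calc I.d 1 (1 - 1) y = I.d 1 (1 - 1) (co1 hI y • s) := by rw [← co1_spec hI y]
      _ = co1 hI y • I.d 1 (1 - 1) s := map_zsmul _ _ _
      _ = co1 hI y • (s₁ - s₀) := by
          rw [show I.d 1 (1 - 1) s = s₁ - s₀ from hI.ds]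
      _ = _ := by rw [smul_sub, neg_smul]; abel
  unfold val00 val01
  rw [hy, co0_comb hI, map_zsmul (T.d 1 (1 - 1)), map_add, map_zsmul, map_zsmul,
    dQQ s₀ s₁ s tp hI, dQQ' s₀ s₁ s tp hI]
  module

/-- (D3) -/
lemma dval3 (a : R2) (y : I.X 0) :
    val00 s₀ s₁ s tp hI hE (e (1 - 1) ((1 - θel 2) * a)) y = 0 := by
  have hq : ee hE 0 le_rfl (e (1 - 1) ((1 - θel 2) * a)) = (1 - θel 2) * a :=
    ee_e hE 0 le_rfl _
  unfold val00
  rw [hq, c0_onesub, c1_onesub, show c0 a - c1 a + (c1 a - c0 a) = 0 from by ring, zero_smul]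

/-- (D4) -/
lemma dval4 (a : R2) (y : I.X 1) :
    val01 s₀ s₁ s tp hI hE (e (1 - 1) ((1 - θel 2) * a)) y =
      T.d 2 (2 - 1) (val11 s₀ s₁ s tp hI hE (e 1 a) y) := by
  have hq : ee hE 0 le_rfl (e (1 - 1) ((1 - θel 2) * a)) = (1 - θel 2) * a :=
    ee_e hE 0 le_rfl _
  unfold val01 val11
  rw [hq, c0_onesub, c1_onesub, ee_e, map_zsmul, dRR s₀ s₁ s tp hI]
  module

/-- (D5) -/
lemma dval5 (a : R2) (y : I.X 1) :
    val11 s₀ s₁ s tp hI hE (e (2 - 1) ((1 + θel 2) * a)) y = 0 := by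
  have hq : ee hE 1 zero_le_one (e (2 - 1) ((1 + θel 2) * a)) = (1 + θel 2) * a :=
    ee_e hE 1 zero_le_one _
  unfold val11
  rw [hq, c0_oneadd, c1_oneadd, show c0 a + c1 a - (c1 a + c0 a) = 0 from by ring, mul_zero,
    zero_smul]

end Aux6

section Aux7
variable {I : Cx} (s₀ s₁ : I.X 0) (s : I.X 1) {T : Cx} (tp : IsTensorPow I 2 T)
  (hI : IsInterval I s₀ s₁ s) {E : Cx} {e : ∀ n : ℤ, R2 →+ E.X n} (hE : IsStdRes 2 E e)

lemma hC00 (x : E.X 0) (y : I.X 0) :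
    (0 : T.X (-1)) + sgn 0 • (0 : T.X (-1)) =
      T.d 0 (0 - 1) (val00 s₀ s₁ s tp hI hE x y) := by
  rw [dval00 s₀ s₁ s tp hI hE, smul_zero, add_zero]

lemma hC01 (x : E.X 0) (y : I.X 1) :
    (0 : T.X 0) + sgn 0 • val00 s₀ s₁ s tp hI hE x (I.d 1 (1 - 1) y) =
      T.d 1 (1 - 1) (val01 s₀ s₁ s tp hI hE x y) := by
  rw [sgn_zero, one_smul, zero_add]
  exact dval2 s₀ s₁ s tp hI hE x y

lemma hC10 (a : R2) (y : I.X 0) :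
    val00 s₀ s₁ s tp hI hE (e (1 - 1) ((1 - θel 2) * a)) y + sgn 1 • (0 : T.X 0) =
      T.d 1 (1 - 1) (0 : T.X 1) := by
  rw [dval3 s₀ s₁ s tp hI hE, smul_zero, add_zero, map_zero]

lemma hC11 (a : R2) (y : I.X 1) :
    val01 s₀ s₁ s tp hI hE (e (1 - 1) ((1 - θel 2) * a)) y + sgn 1 • (0 : T.X 1) =
      T.d 2 (2 - 1) (val11 s₀ s₁ s tp hI hE (e 1 a) y) := by
  rw [smul_zero, add_zero]
  exact dval4 s₀ s₁ s tp hI hE a y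

lemma hC21 (a : R2) (y : I.X 1) :
    val11 s₀ s₁ s tp hI hE (e (2 - 1) ((1 + θel 2) * a)) y + sgn 2 • (0 : T.X 2) =
      T.d 3 (3 - 1) (0 : T.X 3) := by
  rw [dval5 s₀ s₁ s tp hI hE, smul_zero, add_zero, map_zero]

lemma core (i j : ℤ) (x : E.X i) (y : I.X j) :
    phi s₀ s₁ s tp hI hE (i - 1) j (i + j - 1) (by omega) (E.d i (i - 1) x) y +
      sgn i • phi s₀ s₁ s tp hI hE i (j - 1) (i + j - 1) (by omega) x (I.d j (j - 1) y) =
      T.d (i + j) (i + j - 1) (phi s₀ s₁ s tp hI hE i j (i + j) rfl x y) := by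
  by_cases hi : 0 ≤ i
  · by_cases hj0 : j = 0
    · subst hj0
      by_cases hi0 : i = 0
      · subst hi0
        exact hC00 s₀ s₁ s tp hI hE x y
      · by_cases hi1 : i = 1
        · subst hi1
          rw [← e_ee hE 1 zero_le_one x, hE.dspec 1 le_rfl, if_pos (by decide : Odd (1 : ℤ))]
          exact hC10 s₀ s₁ s tp hI hE (ee hE 1 zero_le_one x) y
        · rw [phi_eval_zero s₀ s₁ s tp hI hE (i := i - 1) (j := 0) (by omega) (by omega)
              (by omega),
            phi_eval_zero s₀ s₁ s tp hI hE (i := i) (j := 0 - 1) (by omega) (by omega)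
              (by omega),
            phi_eval_zero s₀ s₁ s tp hI hE (i := i) (j := 0) (by omega) (by omega) (by omega),
            map_zero, smul_zero]
          simp
    · by_cases hj1 : j = 1
      · subst hj1
        by_cases hi0 : i = 0
        · subst hi0
          exact hC01 s₀ s₁ s tp hI hE x y
        · by_cases hi1 : i = 1
          · subst hi1
            rw [← e_ee hE 1 zero_le_one x, hE.dspec 1 le_rfl, if_pos (by decide : Odd (1 : ℤ))]
            exact hC11 s₀ s₁ s tp hI hE (ee hE 1 zero_le_one x) y
          · by_cases hi2 : i = 2
            · subst hi2
              rw [← e_ee hE 2 (by norm_num) x, hE.dspec 2 one_le_two,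
                if_neg (by decide : ¬ Odd (2 : ℤ)), sum_theta]
              exact hC21 s₀ s₁ s tp hI hE (ee hE 2 (by norm_num) x) y
            · rw [phi_eval_zero s₀ s₁ s tp hI hE (i := i - 1) (j := 1) (by omega) (by omega)
                  (by omega),
                phi_eval_zero s₀ s₁ s tp hI hE (i := i) (j := 1 - 1) (by omega) (by omega)
                  (by omega),
                phi_eval_zero s₀ s₁ s tp hI hE (i := i) (j := 1) (by omega) (by omega)
                  (by omega),
                map_zero, smul_zero]
              simp
      · have hy : y = 0 := hI.degzero j hj0 hj1 y
        subst hy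
        simp only [map_zero, phi_zeror, smul_zero, add_zero]
  · have hx : x = 0 := hE.neg i (by omega) x
    subst hx
    simp only [map_zero, phi_zerol, smul_zero, add_zero, zero_add]

end Aux7

section Aux8
variable {I : Cx} (s₀ s₁ : I.X 0) (s : I.X 1) {T : Cx} (tp : IsTensorPow I 2 T)
  (hI : IsInterval I s₀ s₁ s) {E : Cx} {e : ∀ n : ℤ, R2 →+ E.X n} (hE : IsStdRes 2 E e)
  {Θ : ChainMap T T}

/-- abbreviation for the pt-level description of Θ -/
def ThetaPt (Θ : ChainMap T T) (tp : IsTensorPow I 2 T) : Prop :=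
  ∀ (k0 k1 : ℤ) (x : I.X k0) (y : I.X k1) (n : ℤ) (h : k0 + k1 = n),
    Θ.f n (pt tp k0 k1 x y n h) = sgn (k0 * k1) • pt tp k1 k0 y x n (by omega)

lemma theta_B00 (hpt : ThetaPt Θ tp) : Θ.f 0 (B00 s₀ tp) = B00 s₀ tp := by
  unfold B00
  rw [hpt, show sgn (0 * 0 : ℤ) = 1 from by norm_num [sgn], one_smul]

lemma theta_B11 (hpt : ThetaPt Θ tp) : Θ.f 0 (B11 s₁ tp) = B11 s₁ tp := by
  unfold B11
  rw [hpt, show sgn (0 * 0 : ℤ) = 1 from by norm_num [sgn], one_smul]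

lemma theta_QQ (hpt : ThetaPt Θ tp) : Θ.f 1 (QQ s₀ s₁ s tp) = QQ' s₀ s₁ s tp := by
  unfold QQ QQ'
  rw [map_add, hpt, hpt, show sgn (0 * 1 : ℤ) = 1 from by norm_num [sgn],
    show sgn (1 * 0 : ℤ) = 1 from by norm_num [sgn], one_smul, one_smul]

lemma theta_QQ' (hpt : ThetaPt Θ tp) : Θ.f 1 (QQ' s₀ s₁ s tp) = QQ s₀ s₁ s tp := by
  unfold QQ QQ'
  rw [map_add, hpt, hpt, show sgn (0 * 1 : ℤ) = 1 from by norm_num [sgn],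
    show sgn (1 * 0 : ℤ) = 1 from by norm_num [sgn], one_smul, one_smul, add_comm]

lemma theta_RR (hpt : ThetaPt Θ tp) : Θ.f 2 (RR s tp) = -RR s tp := by
  unfold RR
  rw [hpt, show sgn (1 * 1 : ℤ) = -1 from by norm_num [sgn], neg_one_zsmul]

lemma Eval00 (hpt : ThetaPt Θ tp) (a : R2) (y : I.X 0) :
    val00 s₀ s₁ s tp hI hE (e 0 (θel 2 * a)) y =
      Θ.f 0 (val00 s₀ s₁ s tp hI hE (e 0 a) y) := by
  rw [val00_gen, val00_gen, c0_theta, c1_theta, map_zsmul, map_add, map_zsmul, map_zsmul,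
    theta_B00 s₀ tp hpt, theta_B11 s₁ tp hpt, add_comm (c1 a) (c0 a)]

lemma Eval01 (hpt : ThetaPt Θ tp) (a : R2) (y : I.X 1) :
    val01 s₀ s₁ s tp hI hE (e 0 (θel 2 * a)) y =
      Θ.f 1 (val01 s₀ s₁ s tp hI hE (e 0 a) y) := by
  rw [val01_gen, val01_gen, c0_theta, c1_theta, map_zsmul, map_add, map_zsmul, map_zsmul,
    theta_QQ s₀ s₁ s tp hpt, theta_QQ' s₀ s₁ s tp hpt]
  congr 1
  abel

lemma Eval11 (hpt : ThetaPt Θ tp) (a : R2) (y : I.X 1) :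
    val11 s₀ s₁ s tp hI hE (e 1 (θel 2 * a)) y =
      Θ.f 2 (val11 s₀ s₁ s tp hI hE (e 1 a) y) := by
  rw [val11_gen, val11_gen, c0_theta, c1_theta, map_zsmul, theta_RR s tp hpt, smul_neg,
    ← neg_smul]
  congr 1
  ring

lemma ecore_val (hpt : ThetaPt Θ tp) (i j n : ℤ) (h : i + j = n) (a : R2) (y : I.X j) :
    phi s₀ s₁ s tp hI hE i j n h (e i (θel 2 * a)) y =
      Θ.f n (phi s₀ s₁ s tp hI hE i j n h (e i a) y) := by
  subst h
  by_cases h00 : i = 0 ∧ j = 0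
  · obtain ⟨rfl, rfl⟩ := h00
    exact Eval00 s₀ s₁ s tp hI hE hpt a y
  · by_cases h01 : i = 0 ∧ j = 1
    · obtain ⟨rfl, rfl⟩ := h01
      exact Eval01 s₀ s₁ s tp hI hE hpt a y
    · by_cases h11 : i = 1 ∧ j = 1
      · obtain ⟨rfl, rfl⟩ := h11
        exact Eval11 s₀ s₁ s tp hI hE hpt a y
      · rw [phi_eval_zero s₀ s₁ s tp hI hE h00 h01 h11,
          phi_eval_zero s₀ s₁ s tp hI hE h00 h01 h11, map_zero]

end Aux8

lemma btι_zerol {E I TEI : Cx} (bt : IsTensor E I TEI) (i j n : ℤ) (h : i + j = n)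
    (y : I.X j) : bt.ι i j n h 0 y = 0 := by
  have h2 := bt.ι_addl i j n h 0 0 y
  rw [add_zero] at h2
  exact (left_eq_add.mp h2)

section Aux9
variable {I : Cx} (s₀ s₁ : I.X 0) (s : I.X 1) {T : Cx} (tp : IsTensorPow I 2 T)
  (hI : IsInterval I s₀ s₁ s) {E : Cx} {e : ∀ n : ℤ, R2 →+ E.X n} (hE : IsStdRes 2 E e)

lemma v00_1_0 : val00 s₀ s₁ s tp hI hE (e 0 1) s₀ = pt tp 0 0 s₀ s₀ 0 rfl := by
  rw [val00_gen, c0_one, c1_one, co0_s0 hI]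
  simp [B00]
lemma v00_1_1 : val00 s₀ s₁ s tp hI hE (e 0 1) s₁ = pt tp 0 0 s₁ s₁ 0 rfl := by
  rw [val00_gen, c0_one, c1_one, co0_s1 hI]
  simp [B11]
lemma v00_t_0 : val00 s₀ s₁ s tp hI hE (e 0 (θel 2)) s₀ = pt tp 0 0 s₀ s₀ 0 rfl := by
  rw [val00_gen, c0_th, c1_th, co0_s0 hI]
  simp [B00]
lemma v00_t_1 : val00 s₀ s₁ s tp hI hE (e 0 (θel 2)) s₁ = pt tp 0 0 s₁ s₁ 0 rfl := by
  rw [val00_gen, c0_th, c1_th, co0_s1 hI]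
  simp [B11]
lemma v01_1 : val01 s₀ s₁ s tp hI hE (e 0 1) s = QQ s₀ s₁ s tp := by
  rw [val01_gen, c0_one, c1_one, co1_s hI]
  simp
lemma v01_t : val01 s₀ s₁ s tp hI hE (e 0 (θel 2)) s = QQ' s₀ s₁ s tp := by
  rw [val01_gen, c0_th, c1_th, co1_s hI]
  simp
lemma v11_1 : val11 s₀ s₁ s tp hI hE (e 1 1) s = RR s tp := by
  rw [val11_gen, c0_one, c1_one, co1_s hI]
  simp
lemma v11_t : val11 s₀ s₁ s tp hI hE (e 1 (θel 2)) s = -(RR s tp) := by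
  rw [val11_gen, c0_th, c1_th, co1_s hI,
    show (1 * ((0 : ℤ) - 1)) = -1 from by ring, neg_one_zsmul]

end Aux9
end Aux
theorem p2_Hhat_chain_map_and_equivariant
    -- the interval complex `I`:
    (I : Cx) (s₀ s₁ : I.X 0) (s : I.X 1) (hI : IsInterval I s₀ s₁ s)
    -- the standard complex `Eℤ_2`:
    (E : Cx) (e : ∀ n : ℤ, MonoidAlgebra ℤ (Multiplicative (ZMod 2)) →+ E.X n)
    (hE : IsStdRes 2 E e)
    -- `TEI` realizes `Eℤ_2 ⊗ I` and `T` realizes `I ⊗ I`: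
    (TEI : Cx) (bt : IsTensor E I TEI)
    (T : Cx) (tp : IsTensorPow I 2 T)
    -- `Θ` is the signed transposition `θ·(x ⊗ y) = (−1)^{|x||y|} y ⊗ x` on `I ⊗ I`:
    (Θ : ChainMap T T)
    (hΘ : ∀ k n (h : (∑ i, k i) = n) (v : ∀ i, I.X (k i)),
      Θ.f n (tp.ι k n h v) =
        sgn (k 0 * k 1) •
          tp.ι (fun i => k (Equiv.swap 0 1 i)) n
            ((Equiv.sum_comp (Equiv.swap 0 1) k).trans h)
            (fun i => v (Equiv.swap 0 1 i)))
    -- `Θ'` is the action of `θ` on `Eℤ_2 ⊗ I` through the `Eℤ_2` factor: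
    (Θ' : ChainMap TEI TEI)
    (hΘ' : ∀ i j n (h : i + j = n) a y,
      Θ'.f n (bt.ι i j n h (e i a) y) = bt.ι i j n h (e i (θel 2 * a)) y) :
    -- the `ℤ`-linear map `Ĥ : Eℤ_2 ⊗ I → I ⊗ I` with the values listed below is a
    -- chain map and is equivariant for the `ℤ/2`-actions:
    ∃ H : ChainMap TEI T,
      -- `Ĥ(a ⊗ s_j) = s_j ⊗ s_j` for `a ∈ {1, θ} ⊆ (Eℤ_2)_0` and `j = 0, 1`:
      (∀ a, a = 1 ∨ a = θel 2 →
        (H.f 0 (bt.ι 0 0 0 rfl (e 0 a) s₀) =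
          tp.ι (wdeg ![false, false]) 0 (by decide)
            (wfam I s ![s₀, s₀] ![false, false])) ∧
        (H.f 0 (bt.ι 0 0 0 rfl (e 0 a) s₁) =
          tp.ι (wdeg ![false, false]) 0 (by decide)
            (wfam I s ![s₁, s₁] ![false, false]))) ∧
      -- `Ĥ(a ⊗ s_j) = 0` for `a ∈ {1, θ} ⊆ (Eℤ_2)_k`, `k ≥ 1`, `j = 0, 1`:
      (∀ k : ℤ, 1 ≤ k → ∀ a, a = 1 ∨ a = θel 2 →
        (H.f k (bt.ι k 0 k (add_zero k) (e k a) s₀) = 0) ∧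
        (H.f k (bt.ι k 0 k (add_zero k) (e k a) s₁) = 0)) ∧
      -- `Ĥ(1 ⊗ s) = s₁ ⊗ s + s ⊗ s₀` for `1 ∈ (Eℤ_2)_0`:
      (H.f 1 (bt.ι 0 1 1 rfl (e 0 1) s) =
        tp.ι (wdeg ![false, true]) 1 (by decide)
          (wfam I s ![s₁, s₀] ![false, true]) +
        tp.ι (wdeg ![true, false]) 1 (by decide)
          (wfam I s ![s₀, s₀] ![true, false])) ∧
      -- `Ĥ(θ ⊗ s) = s ⊗ s₁ + s₀ ⊗ s` for `θ ∈ (Eℤ_2)_0`: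
      (H.f 1 (bt.ι 0 1 1 rfl (e 0 (θel 2)) s) =
        tp.ι (wdeg ![true, false]) 1 (by decide)
          (wfam I s ![s₀, s₁] ![true, false]) +
        tp.ι (wdeg ![false, true]) 1 (by decide)
          (wfam I s ![s₀, s₀] ![false, true])) ∧
      -- `Ĥ(1 ⊗ s) = s ⊗ s` for `1 ∈ (Eℤ_2)_1`:
      (H.f 2 (bt.ι 1 1 2 rfl (e 1 1) s) =
        tp.ι (wdeg ![true, true]) 2 (by decide)
          (wfam I s ![s₀, s₀] ![true, true])) ∧
      -- `Ĥ(θ ⊗ s) = −s ⊗ s` for `θ ∈ (Eℤ_2)_1`: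
      (H.f 2 (bt.ι 1 1 2 rfl (e 1 (θel 2)) s) =
        - tp.ι (wdeg ![true, true]) 2 (by decide)
            (wfam I s ![s₀, s₀] ![true, true])) ∧
      -- `Ĥ(a ⊗ s) = 0` for `a ∈ {1, θ} ⊆ (Eℤ_2)_k`, `k ≥ 2`:
      (∀ k : ℤ, 2 ≤ k → ∀ a, a = 1 ∨ a = θel 2 →
        H.f (k + 1) (bt.ι k 1 (k + 1) rfl (e k a) s) = 0) ∧
      -- equivariance for the `ℤ/2`-actions:
      (∀ n (x : TEI.X n), H.f n (Θ'.f n x) = Θ.f n (H.f n x)) := by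

  classical
  obtain ⟨Hf, Hspec, -⟩ := bt.univ T.X (phi s₀ s₁ s tp hI hE)
    (phi_addl s₀ s₁ s tp hI hE) (phi_addr s₀ s₁ s tp hI hE)
  have hpt : ThetaPt Θ tp := fun k0 k1 x y n h => theta_pt tp hΘ k0 k1 x y n h
  have hcomm : ∀ i' j' (z : TEI.X i'), Hf j' (TEI.d i' j' z) = T.d i' j' (Hf i' z) := by
    intro i' j' z
    by_cases hij : j' = i' - 1
    · subst hij
      obtain ⟨ψ, hψ, hu⟩ := bt.univ (fun n => T.X (n - 1))
        (fun i j n h x y => T.d n (n - 1) (phi s₀ s₁ s tp hI hE i j n h x y))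
        (fun i j n h x x' y => by simp only [phi_addl, map_add])
        (fun i j n h x y y' => by simp only [phi_addr, map_add])
      have h1 : (fun n => (Hf (n - 1)).comp (TEI.d n (n - 1))) = ψ := by
        apply hu
        intro i j n h x y
        simp only [AddMonoidHom.comp_apply]
        rw [bt.ι_d]
        simp only [map_add, map_zsmul]
        rw [Hspec, Hspec]
        subst h
        exact core s₀ s₁ s tp hI hE i j x y
      have h2 : (fun n => (T.d n (n - 1)).comp (Hf n)) = ψ := by
        apply hu
        intro i j n h x y
        simp only [AddMonoidHom.comp_apply]
        rw [Hspec]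
      exact (DFunLike.congr_fun (congrFun h1 i') z).trans
        (DFunLike.congr_fun (congrFun h2 i') z).symm
    · rw [TEI.d_off i' j' hij, T.d_off i' j' hij]
      simp
  refine ⟨⟨Hf, hcomm⟩, ?_, ?_, ?_, ?_, ?_, ?_, ?_, ?_⟩
  · -- value on a ⊗ s_j in degree 0
    intro a ha
    have h30 : tp.ι (wdeg ![false, false]) 0 (by decide)
        (wfam I s ![s₀, s₀] ![false, false]) = pt tp 0 0 s₀ s₀ 0 rfl :=
      tpι_pt tp (wdeg ![false, false]) 0 (by decide) (wfam I s ![s₀, s₀] ![false, false])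
    have h31 : tp.ι (wdeg ![false, false]) 0 (by decide)
        (wfam I s ![s₁, s₁] ![false, false]) = pt tp 0 0 s₁ s₁ 0 rfl :=
      tpι_pt tp (wdeg ![false, false]) 0 (by decide) (wfam I s ![s₁, s₁] ![false, false])
    rcases ha with rfl | rfl
    · exact ⟨(Hspec 0 0 0 rfl (e 0 1) s₀).trans
        ((v00_1_0 s₀ s₁ s tp hI hE).trans h30.symm),
        (Hspec 0 0 0 rfl (e 0 1) s₁).trans ((v00_1_1 s₀ s₁ s tp hI hE).trans h31.symm)⟩
    · exact ⟨(Hspec 0 0 0 rfl (e 0 (θel 2)) s₀).trans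
        ((v00_t_0 s₀ s₁ s tp hI hE).trans h30.symm),
        (Hspec 0 0 0 rfl (e 0 (θel 2)) s₁).trans
          ((v00_t_1 s₀ s₁ s tp hI hE).trans h31.symm)⟩
  · -- vanishing on a ⊗ s_j in degrees ≥ 1
    intro k hk a ha
    constructor
    · exact (Hspec k 0 k (add_zero k) (e k a) s₀).trans
        (phi_eval_zero s₀ s₁ s tp hI hE (by omega) (by omega) (by omega))
    · exact (Hspec k 0 k (add_zero k) (e k a) s₁).trans
        (phi_eval_zero s₀ s₁ s tp hI hE (by omega) (by omega) (by omega))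
  · -- Ĥ(1 ⊗ s) in degree 1
    have h3 : tp.ι (wdeg ![false, true]) 1 (by decide)
        (wfam I s ![s₁, s₀] ![false, true]) = pt tp 0 1 s₁ s 1 rfl :=
      tpι_pt tp (wdeg ![false, true]) 1 (by decide) (wfam I s ![s₁, s₀] ![false, true])
    have h4 : tp.ι (wdeg ![true, false]) 1 (by decide)
        (wfam I s ![s₀, s₀] ![true, false]) = pt tp 1 0 s s₀ 1 rfl :=
      tpι_pt tp (wdeg ![true, false]) 1 (by decide) (wfam I s ![s₀, s₀] ![true, false])
    refine (Hspec 0 1 1 rfl (e 0 1) s).trans ((v01_1 s₀ s₁ s tp hI hE).trans ?_)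
    rw [h3, h4]
    rfl
  · -- Ĥ(θ ⊗ s) in degree 1
    have h5 : tp.ι (wdeg ![true, false]) 1 (by decide)
        (wfam I s ![s₀, s₁] ![true, false]) = pt tp 1 0 s s₁ 1 rfl :=
      tpι_pt tp (wdeg ![true, false]) 1 (by decide) (wfam I s ![s₀, s₁] ![true, false])
    have h6 : tp.ι (wdeg ![false, true]) 1 (by decide)
        (wfam I s ![s₀, s₀] ![false, true]) = pt tp 0 1 s₀ s 1 rfl :=
      tpι_pt tp (wdeg ![false, true]) 1 (by decide) (wfam I s ![s₀, s₀] ![false, true])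
    refine (Hspec 0 1 1 rfl (e 0 (θel 2)) s).trans ((v01_t s₀ s₁ s tp hI hE).trans ?_)
    rw [h5, h6]
    rfl
  · -- Ĥ(1 ⊗ s) in degree 2
    have h7 : tp.ι (wdeg ![true, true]) 2 (by decide)
        (wfam I s ![s₀, s₀] ![true, true]) = pt tp 1 1 s s 2 rfl :=
      tpι_pt tp (wdeg ![true, true]) 2 (by decide) (wfam I s ![s₀, s₀] ![true, true])
    exact (Hspec 1 1 2 rfl (e 1 1) s).trans ((v11_1 s₀ s₁ s tp hI hE).trans h7.symm)
  · -- Ĥ(θ ⊗ s) in degree 2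
    have h7 : tp.ι (wdeg ![true, true]) 2 (by decide)
        (wfam I s ![s₀, s₀] ![true, true]) = pt tp 1 1 s s 2 rfl :=
      tpι_pt tp (wdeg ![true, true]) 2 (by decide) (wfam I s ![s₀, s₀] ![true, true])
    refine (Hspec 1 1 2 rfl (e 1 (θel 2)) s).trans ((v11_t s₀ s₁ s tp hI hE).trans ?_)
    rw [h7]
    rfl
  · -- vanishing on a ⊗ s in degrees ≥ 2
    intro k hk a ha
    exact (Hspec k 1 (k + 1) rfl (e k a) s).trans
      (phi_eval_zero s₀ s₁ s tp hI hE (by omega) (by omega) (by omega))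
  · -- equivariance
    intro n z
    obtain ⟨ψ, hψ, hu⟩ := bt.univ T.X
      (fun i j n h x y => Θ.f n (phi s₀ s₁ s tp hI hE i j n h x y))
      (fun i j n h x x' y => by simp only [phi_addl, map_add])
      (fun i j n h x y y' => by simp only [phi_addr, map_add])
    have h1 : (fun n => (Hf n).comp (Θ'.f n)) = ψ := by
      apply hu
      intro i j n h x y
      simp only [AddMonoidHom.comp_apply]
      by_cases hi : 0 ≤ i
      · rw [show x = e i (ee hE i hi x) from (e_ee hE i hi x).symm,
          hΘ' i j n h (ee hE i hi x) y, Hspec]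
        exact ecore_val s₀ s₁ s tp hI hE hpt i j n h (ee hE i hi x) y
      · have hx : x = 0 := hE.neg i (by omega) x
        subst hx
        rw [btι_zerol bt]
        simp only [map_zero, phi_zerol]
    have h2 : (fun n => (Θ.f n).comp (Hf n)) = ψ := by
      apply hu
      intro i j n h x y
      simp only [AddMonoidHom.comp_apply]
      rw [Hspec]
    exact (DFunLike.congr_fun (congrFun h1 n) z).trans
      (DFunLike.congr_fun (congrFun h2 n) z).symm
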